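/- arXiv:quant-ph/0412071 — 8 statements merged into one kernel-verified Lean document; each statement's English description precedes it below -/
import Mathlib

section
/- Let d ≥ 1 be an integer and let G = (V, E) be a finite simple graph with nonempty vertex set. If G has a nonempty evenly seen set D with |D| = d, then δ_loc(G) ≤ d − 1. -/
open SimpleGraph

variable {V : Type*}

/-- Local complementation of `G` at the vertex `v`: adjacency among the
neighbors of `v` is complemented, i.e. the edge set is `E Δ K_v`. -/
def localComp (G : SimpleGraph V) (v : V) : SimpleGraph V where
  Adj u w := u ≠ w ∧ ¬ (G.Adj u w ↔ (G.Adj v u ∧ G.Adj v w))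
  symm := by
    constructor
    intro u w h
    refine ⟨h.1.symm, ?_⟩
    have h1 := G.adj_comm u w
    have h2 := h.2
    tauto
  loopless := by
    constructor
    intro u h
    exact h.1 rfl

/-- The minimal vertex degree `δ(G)` of a graph. -/
noncomputable def minDegree (G : SimpleGraph V) : ℕ :=
  sInf (Set.range fun v => (G.neighborSet v).ncard)

/-- The minimal degree under local complementation `δ_loc(G)`: the minimum of
`δ(G')` over all graphs `G'` obtainable from `G` by a finite sequence of
local complementations. -/
noncomputable def minDegreeLoc (G : SimpleGraph V) : ℕ :=
  sInf {n | ∃ l : List V, minDegree (l.foldl localComp G) = n}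

/-- `D` is an evenly seen set if every vertex outside `D` has an even number
of neighbors in `D`. -/
def EvenlySeen (G : SimpleGraph V) (D : Set V) : Prop :=
  ∀ u ∉ D, Even ((G.neighborSet u ∩ D).ncard)

/-- A nonempty set `K` is `d`-locally evenly seen if there is a set `D` with
`K ⊆ D ⊆ V` and `|D| = d` such that every vertex outside `D` has an even
number of neighbors in `K`. -/
def LocallyEvenlySeen (G : SimpleGraph V) (d : ℕ) (K : Set V) : Prop :=
  K.Nonempty ∧ ∃ D : Set V, K ⊆ D ∧ D.ncard = d ∧
    ∀ u ∉ D, Even ((G.neighborSet u ∩ K).ncard)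



section Aux
open symmDiff
set_option linter.unusedSectionVars false

lemma localComp_nbhd_of_not_adj (G : SimpleGraph V) {v w : V} (h : ¬ G.Adj v w) :
    (localComp G v).neighborSet w = G.neighborSet w := by
  ext x
  simp only [mem_neighborSet, localComp]
  constructor
  · intro ⟨h1, h2⟩; tauto
  · intro hx; exact ⟨hx.ne, by tauto⟩

lemma localComp_nbhd_of_adj (G : SimpleGraph V) {v w : V} (h : G.Adj v w) :
    (localComp G v).neighborSet w = (G.neighborSet w ∆ G.neighborSet v) \ {w} := by
  ext x
  simp only [mem_neighborSet, localComp, Set.mem_diff, Set.mem_symmDiff, mem_neighborSet,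
    Set.mem_singleton_iff]
  constructor
  · intro ⟨h1, h2⟩
    refine ⟨?_, fun hx => h1 hx.symm⟩
    tauto
  · intro ⟨h1, h2⟩
    exact ⟨fun hh => h2 hh.symm, by tauto⟩

variable [Fintype V]

lemma ncard_symmDiff_mod (A B : Set V) :
    (A ∆ B).ncard % 2 = (A.ncard + B.ncard) % 2 := by
  classical
  have hd : A ∆ B = (A \ B) ∪ (B \ A) := symmDiff_def A B
  have h1 : (A ∆ B).ncard = (A \ B).ncard + (B \ A).ncard := by
    rw [hd, Set.ncard_union_eq disjoint_sdiff_sdiff]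
  have h2 : A.ncard = (A \ B).ncard + (A ∩ B).ncard := by
    conv_lhs => rw [← Set.diff_union_inter A B]
    exact Set.ncard_union_eq
      (disjoint_sdiff_self_left.mono_right Set.inter_subset_right)
      (Set.toFinite _) (Set.toFinite _)
  have h3 : B.ncard = (B \ A).ncard + (B ∩ A).ncard := by
    conv_lhs => rw [← Set.diff_union_inter B A]
    exact Set.ncard_union_eq
      (disjoint_sdiff_self_left.mono_right Set.inter_subset_right)
      (Set.toFinite _) (Set.toFinite _)
  have h4 : (A ∩ B).ncard = (B ∩ A).ncard := by rw [Set.inter_comm]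
  omega

lemma inter_diff_eq (A K : Set V) (v : V) : A ∩ (K \ {v}) = (A ∩ K) \ {v} := by
  ext x; simp only [Set.mem_inter_iff, Set.mem_diff, Set.mem_singleton_iff]; tauto

lemma symmDiff_diff_inter (A B K : Set V) (w : V) :
    ((A ∆ B) \ {w}) ∩ K = ((A ∩ K) ∆ (B ∩ K)) \ {w} := by
  ext x
  simp only [Set.mem_inter_iff, Set.mem_diff, Set.mem_singleton_iff, Set.mem_symmDiff]
  tauto

/-- Local complementation at a vertex outside `D` preserves the property that
every vertex outside `D` sees `K` evenly. -/
lemma preserve_even (G : SimpleGraph V) {K D : Set V} {u : V} (hu : u ∉ D) (hKD : K ⊆ D)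
    (he : ∀ w ∉ D, Even ((G.neighborSet w ∩ K).ncard)) :
    ∀ w ∉ D, Even (((localComp G u).neighborSet w ∩ K).ncard) := by
  intro w hw
  by_cases hadj : G.Adj u w
  · rw [localComp_nbhd_of_adj G hadj, symmDiff_diff_inter]
    have hwS : w ∉ (G.neighborSet w ∩ K) ∆ (G.neighborSet u ∩ K) := by
      intro h
      rcases Set.mem_symmDiff.1 h with ⟨⟨_, hk⟩, _⟩ | ⟨⟨_, hk⟩, _⟩ <;> exact hw (hKD hk)
    rw [Set.diff_singleton_eq_self hwS]
    have hmod := ncard_symmDiff_mod (G.neighborSet w ∩ K) (G.neighborSet u ∩ K)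
    have h1 := he w hw
    have h2 := he u hu
    rw [Nat.even_iff] at h1 h2 ⊢
    omega
  · rw [localComp_nbhd_of_not_adj G hadj]
    exact he w hw

/-- After complementing at an outside vertex `u` adjacent to `v ∈ K`, the vertex `v`
sees `K` oddly (assuming it saw `K` evenly before, as did `u`). -/
lemma odd_after (G : SimpleGraph V) {K : Set V} {u v : V} (hvK : v ∈ K) (hadj : G.Adj u v)
    (hev_v : Even ((G.neighborSet v ∩ K).ncard))
    (hev_u : Even ((G.neighborSet u ∩ K).ncard)) :
    ¬ Even (((localComp G u).neighborSet v ∩ K).ncard) := by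
  rw [localComp_nbhd_of_adj G hadj, symmDiff_diff_inter]
  have hvS : v ∈ (G.neighborSet v ∩ K) ∆ (G.neighborSet u ∩ K) := by
    rw [Set.mem_symmDiff]
    right
    exact ⟨⟨hadj, hvK⟩, fun h => G.loopless.irrefl v h.1⟩
  have hpos : 1 ≤ ((G.neighborSet v ∩ K) ∆ (G.neighborSet u ∩ K)).ncard :=
    (Set.ncard_pos (Set.toFinite _)).2 ⟨v, hvS⟩
  rw [Set.ncard_diff_singleton_of_mem hvS]
  have hmod := ncard_symmDiff_mod (G.neighborSet v ∩ K) (G.neighborSet u ∩ K)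
  rw [Nat.even_iff] at hev_v hev_u ⊢
  omega

/-- If `v ∈ K` sees `K` oddly, then after complementing at `v`, the set `K \ {v}`
is still seen evenly from outside `D`, and it is nonempty. -/
lemma step3 (G : SimpleGraph V) {K D : Set V} {v : V} (hvK : v ∈ K) (hKD : K ⊆ D)
    (he : ∀ w ∉ D, Even ((G.neighborSet w ∩ K).ncard))
    (hodd : ¬ Even ((G.neighborSet v ∩ K).ncard)) :
    (K \ {v}).Nonempty ∧
      ∀ w ∉ D, Even (((localComp G v).neighborSet w ∩ (K \ {v})).ncard) := by
  have hNv : (G.neighborSet v ∩ K).Nonempty := by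
    rw [Set.nonempty_iff_ne_empty]
    intro h
    rw [h] at hodd
    simp at hodd
  obtain ⟨a, haN, haK⟩ := hNv
  constructor
  · exact ⟨a, haK, fun h => G.loopless.irrefl v (by rwa [Set.mem_singleton_iff.1 h] at haN)⟩
  intro w hw
  have hwK : w ∉ K := fun h => hw (hKD h)
  by_cases hadj : G.Adj v w
  · rw [localComp_nbhd_of_adj G hadj, symmDiff_diff_inter]
    have hwS : w ∉ (G.neighborSet w ∩ (K \ {v})) ∆ (G.neighborSet v ∩ (K \ {v})) := by
      intro h
      rcases Set.mem_symmDiff.1 h with ⟨⟨_, hk⟩, _⟩ | ⟨⟨_, hk⟩, _⟩ <;> exact hwK hk.1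
    rw [Set.diff_singleton_eq_self hwS]
    rw [inter_diff_eq, inter_diff_eq]
    have hv1 : v ∈ G.neighborSet w ∩ K := ⟨hadj.symm, hvK⟩
    have hv2 : v ∉ G.neighborSet v ∩ K := fun h => G.loopless.irrefl v h.1
    have e1 : ((G.neighborSet w ∩ K) \ {v}).ncard = (G.neighborSet w ∩ K).ncard - 1 :=
      Set.ncard_diff_singleton_of_mem hv1
    have e1' : 1 ≤ (G.neighborSet w ∩ K).ncard := (Set.ncard_pos (Set.toFinite _)).2 ⟨v, hv1⟩
    have e2 : (G.neighborSet v ∩ K) \ {v} = G.neighborSet v ∩ K :=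
      Set.diff_singleton_eq_self hv2
    rw [e2]
    have hmod := ncard_symmDiff_mod ((G.neighborSet w ∩ K) \ {v}) (G.neighborSet v ∩ K)
    have h1 := he w hw
    rw [Nat.even_iff] at h1 hodd ⊢
    omega
  · rw [localComp_nbhd_of_not_adj G hadj, inter_diff_eq]
    have hv2 : v ∉ G.neighborSet w ∩ K := fun h => hadj h.1.symm
    rw [Set.diff_singleton_eq_self hv2]
    exact he w hw

omit [Fintype V] in
lemma minDegreeLoc_le_minDegree (G : SimpleGraph V) : minDegreeLoc G ≤ minDegree G :=
  Nat.sInf_le ⟨[], rfl⟩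

omit [Fintype V] in
lemma minDegree_le (G : SimpleGraph V) (v : V) : minDegree G ≤ (G.neighborSet v).ncard :=
  Nat.sInf_le ⟨v, rfl⟩

omit [Fintype V] in
lemma minDegreeLoc_le_localComp (G : SimpleGraph V) (v : V) :
    minDegreeLoc G ≤ minDegreeLoc (localComp G v) := by
  have hne : {n | ∃ l : List V, minDegree (l.foldl localComp (localComp G v)) = n}.Nonempty :=
    ⟨_, [], rfl⟩
  obtain ⟨l, hl⟩ := Nat.sInf_mem hne
  exact Nat.sInf_le ⟨v :: l, hl⟩

lemma key (n : ℕ) : ∀ (G : SimpleGraph V) (K D : Set V), K.Nonempty → K ⊆ D →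
    (∀ u ∉ D, Even ((G.neighborSet u ∩ K).ncard)) → D.ncard + K.ncard ≤ n →
    minDegreeLoc G ≤ D.ncard - 1 := by
  induction n with
  | zero =>
    intro G K D hK hKD he hn
    exact absurd hn (by have := hK.ncard_pos (Set.toFinite _); omega)
  | succ n ih =>
    intro G K D hK hKD he hn
    classical
    have hKpos : 1 ≤ K.ncard := hK.ncard_pos (Set.toFinite _)
    have hKDcard : K.ncard ≤ D.ncard := Set.ncard_le_ncard hKD (Set.toFinite _)
    by_cases h1 : ∃ v ∈ K, G.neighborSet v ⊆ D
    · obtain ⟨v, hvK, hsub⟩ := h1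
      have hsub' : G.neighborSet v ⊆ D \ {v} := fun x hx =>
        ⟨hsub hx, fun h => G.loopless.irrefl v (by rwa [Set.mem_singleton_iff.1 h] at hx)⟩
      have hle : (G.neighborSet v).ncard ≤ (D \ {v}).ncard :=
        Set.ncard_le_ncard hsub' (Set.toFinite _)
      have hDc : (D \ {v}).ncard = D.ncard - 1 :=
        Set.ncard_diff_singleton_of_mem (hKD hvK)
      have := le_trans (minDegreeLoc_le_minDegree G) (minDegree_le G v)
      omega
    · push_neg at h1
      by_cases h2 : ∃ v ∈ D \ K, Even ((G.neighborSet v ∩ K).ncard)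
      · obtain ⟨v, hvD, hev⟩ := h2
        have hKD' : K ⊆ D \ {v} := fun x hx =>
          ⟨hKD hx, fun h => hvD.2 (by rwa [Set.mem_singleton_iff.1 h] at hx)⟩
        have he' : ∀ u ∉ D \ {v}, Even ((G.neighborSet u ∩ K).ncard) := by
          intro u hu
          by_cases hud : u ∈ D
          · have huv : u = v := by
              by_contra hne2
              exact hu ⟨hud, fun h => hne2 (Set.mem_singleton_iff.1 h)⟩
            subst huv; exact hev
          · exact he u hud
        have hDc : (D \ {v}).ncard = D.ncard - 1 :=
          Set.ncard_diff_singleton_of_mem hvD.1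
        have hDpos : 1 ≤ D.ncard :=
          (Set.ncard_pos (Set.toFinite _)).2 ⟨v, hvD.1⟩
        have hrec := ih G K (D \ {v}) hK hKD' he' (by omega)
        omega
      · push_neg at h2
        by_cases h3 : ∃ v ∈ K, ¬ Even ((G.neighborSet v ∩ K).ncard)
        · obtain ⟨v, hvK, hodd⟩ := h3
          obtain ⟨hne', he'⟩ := step3 G hvK hKD he hodd
          have hKc : (K \ {v}).ncard = K.ncard - 1 :=
            Set.ncard_diff_singleton_of_mem hvK
          have hrec := ih (localComp G v) (K \ {v}) D hne'
            (fun x hx => hKD hx.1) he' (by omega)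
          exact le_trans (minDegreeLoc_le_localComp G v) hrec
        · push_neg at h3
          obtain ⟨v, hvK⟩ := hK
          obtain ⟨u, huN, huD⟩ : ∃ u, u ∈ G.neighborSet v ∧ u ∉ D := by
            have h := h1 v hvK
            rw [Set.not_subset] at h
            obtain ⟨u, hm, hm'⟩ := h
            exact ⟨u, hm, hm'⟩
          have hadj : G.Adj u v := huN.symm
          have he1 : ∀ w ∉ D, Even (((localComp G u).neighborSet w ∩ K).ncard) :=
            preserve_even G huD hKD he
          have hodd1 : ¬ Even (((localComp G u).neighborSet v ∩ K).ncard) :=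
            odd_after G hvK hadj (h3 v hvK) (he u huD)
          obtain ⟨hne', he'⟩ := step3 (localComp G u) hvK hKD he1 hodd1
          have hKc : (K \ {v}).ncard = K.ncard - 1 :=
            Set.ncard_diff_singleton_of_mem hvK
          have hrec := ih (localComp (localComp G u) v) (K \ {v}) D hne'
            (fun x hx => hKD hx.1) he' (by omega)
          exact le_trans (minDegreeLoc_le_localComp G u)
            (le_trans (minDegreeLoc_le_localComp (localComp G u) v) hrec)

end Aux

/-- If a graph `G` (finite, nonempty vertex set) has a nonempty
evenly seen set `D` with `|D| = d` (where `d ≥ 1`), then `δ_loc(G) ≤ d - 1`. -/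
theorem statement_0 [Fintype V] [Nonempty V] (G : SimpleGraph V) (d : ℕ) (hd : 1 ≤ d)
    (D : Set V) (hne : D.Nonempty) (hD : EvenlySeen G D) (hcard : D.ncard = d) :
    minDegreeLoc G ≤ d - 1 := by
  have h := key (D.ncard + D.ncard) G D D hne subset_rfl hD le_rfl
  rwa [hcard] at h
end

section
/- Let d ≥ 1 be an integer and let G = (V, E) be a finite simple graph with nonempty vertex set. If G has a d-locally evenly seen set, then δ_loc(G) ≤ d − 1. -/
open SimpleGraph

variable {V : Type*}

section Aux

attribute [local instance] Classical.propDecidable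

lemma evenZ (n : ℕ) : Even n ↔ (n : ZMod 2) = 0 := by
  rw [even_iff_two_dvd, ← ZMod.natCast_eq_zero_iff]

lemma oddZ (n : ℕ) : ¬ Even n ↔ (n : ZMod 2) = 1 := by
  have h2 : ∀ x : ZMod 2, x = 0 ∨ x = 1 := by decide
  rw [evenZ]
  rcases h2 (n : ZMod 2) with h | h <;> simp [h]

lemma ncardZ [Fintype V] (S : Set V) :
    (S.ncard : ZMod 2) = ∑ w : V, if w ∈ S then (1 : ZMod 2) else 0 := by
  rw [Set.ncard_eq_toFinset_card' S]
  have : S.toFinset = Finset.univ.filter (· ∈ S) := by ext w; simp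
  rw [this, Finset.card_filter]
  push_cast
  rfl

lemma localComp_neighborSet_self (G : SimpleGraph V) (a : V) :
    (localComp G a).neighborSet a = G.neighborSet a := by
  ext w
  simp only [mem_neighborSet]
  constructor
  · rintro ⟨h1, h2⟩
    by_contra hno
    exact h2 (by tauto)
  · intro h
    exact ⟨G.ne_of_adj h, by simp [G.irrefl]; tauto⟩

lemma localComp_neighborSet_of_not_adj (G : SimpleGraph V) (a u : V) (h : ¬ G.Adj a u) :
    (localComp G a).neighborSet u = G.neighborSet u := by
  ext w
  simp only [mem_neighborSet]
  constructor
  · rintro ⟨h1, h2⟩; tauto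
  · intro hw
    exact ⟨G.ne_of_adj hw, by tauto⟩

/-- Key parity identity for neighborhoods after local complementation. -/
lemma parityP [Fintype V] (G : SimpleGraph V) (a u : V) (K : Set V) (hua : u ≠ a) :
    ((((localComp G a).neighborSet u ∩ K).ncard : ZMod 2)) =
      ((G.neighborSet u ∩ K).ncard : ZMod 2) +
      (if G.Adj a u then
        ((G.neighborSet a ∩ K).ncard : ZMod 2) + (if u ∈ K then (1 : ZMod 2) else 0)
       else 0) := by
  by_cases hadj : G.Adj a u
  · simp only [hadj, if_true]
    have hconst : (if u ∈ K then (1 : ZMod 2) else 0) =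
        ∑ w : V, (if w = u then (if u ∈ K then (1 : ZMod 2) else 0) else 0) := by
      rw [Finset.sum_ite_eq' Finset.univ u (fun _ => if u ∈ K then (1 : ZMod 2) else 0)]
      simp
    rw [ncardZ, ncardZ, ncardZ, hconst, ← Finset.sum_add_distrib, ← Finset.sum_add_distrib]
    apply Finset.sum_congr rfl
    intro w _
    by_cases hw : w = u
    · subst hw
      have h1 : w ∉ (localComp G a).neighborSet w ∩ K := by
        simp [mem_neighborSet, (localComp G a).irrefl]
      have h2 : w ∉ G.neighborSet w ∩ K := by simp [mem_neighborSet, G.irrefl]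
      have h3 : w ∈ G.neighborSet a := hadj
      by_cases hK : w ∈ K <;>
        simp [h1, h2, h3, hK] <;> decide
    · have h3 : (if w = u then (if u ∈ K then (1 : ZMod 2) else 0) else 0) = 0 := by
        simp [hw]
      rw [h3, add_zero]
      have hmem : w ∈ (localComp G a).neighborSet u ∩ K ↔
          (¬ (G.Adj u w ↔ G.Adj a w)) ∧ w ∈ K := by
        simp only [Set.mem_inter_iff, mem_neighborSet]
        constructor
        · rintro ⟨⟨h1, h2⟩, h4⟩
          exact ⟨by tauto, h4⟩
        · rintro ⟨h1, h4⟩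
          exact ⟨⟨fun hh => hw (hh.symm), by tauto⟩, h4⟩
      by_cases h5 : G.Adj u w <;> by_cases h6 : G.Adj a w <;> by_cases h7 : w ∈ K <;>
        simp [hmem, Set.mem_inter_iff, mem_neighborSet, h5, h6, h7] <;> decide
  · simp only [hadj, if_false, add_zero]
    rw [localComp_neighborSet_of_not_adj G a u hadj]

variable [Fintype V]

/-- Local complementation outside `D` preserves the evenly-seen property. -/
lemma stepOut (G : SimpleGraph V) (K D : Set V) (hKD : K ⊆ D)
    (hseen : ∀ u ∉ D, Even ((G.neighborSet u ∩ K).ncard)) (v : V) (hv : v ∉ D) :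
    ∀ u ∉ D, Even (((localComp G v).neighborSet u ∩ K).ncard) := by
  intro u hu
  by_cases huv : u = v
  · subst huv
    rw [localComp_neighborSet_self]
    exact hseen u hu
  · rw [evenZ, parityP G v u K huv]
    have h1 := (evenZ _).mp (hseen u hu)
    have h2 := (evenZ _).mp (hseen v hv)
    have huK : u ∉ K := fun h => hu (hKD h)
    simp [h1, h2, huK]

/-- Local complementation at a neighbor `v ∉ D` of `x ∈ K` makes the parity of
`|N(x) ∩ K|` odd. -/
lemma flipOdd (G : SimpleGraph V) (K D : Set V) (hKD : K ⊆ D)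
    (hseen : ∀ u ∉ D, Even ((G.neighborSet u ∩ K).ncard)) (x v : V)
    (hx : x ∈ K) (hv : v ∉ D) (hadj : G.Adj v x)
    (hpar : Even ((G.neighborSet x ∩ K).ncard)) :
    ¬ Even (((localComp G v).neighborSet x ∩ K).ncard) := by
  have hxv : x ≠ v := fun h => hv (h ▸ hKD hx)
  rw [oddZ, parityP G v x K hxv]
  have h1 := (evenZ _).mp hpar
  have h2 := (evenZ _).mp (hseen v hv)
  simp [h1, h2, hadj, hx]

/-- Local complementation at `x ∈ K` with odd `|N(x) ∩ K|` makes `K \ {x}`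
evenly seen. -/
lemma stepIn (G : SimpleGraph V) (K D : Set V) (hKD : K ⊆ D)
    (hseen : ∀ u ∉ D, Even ((G.neighborSet u ∩ K).ncard)) (x : V) (hx : x ∈ K)
    (hodd : ¬ Even ((G.neighborSet x ∩ K).ncard)) :
    ∀ u ∉ D, Even (((localComp G x).neighborSet u ∩ (K \ {x})).ncard) := by
  intro u hu
  have hux : u ≠ x := fun h => hu (h ▸ hKD hx)
  have hxx : x ∉ G.neighborSet x := by simp [mem_neighborSet, G.irrefl]
  have hNx : G.neighborSet x ∩ (K \ {x}) = G.neighborSet x ∩ K := by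
    ext w
    simp only [Set.mem_inter_iff, Set.mem_diff, Set.mem_singleton_iff]
    constructor
    · rintro ⟨h1, h2, _⟩; exact ⟨h1, h2⟩
    · rintro ⟨h1, h2⟩
      exact ⟨h1, h2, fun hh => hxx (hh ▸ h1)⟩
  rw [evenZ, parityP G x u (K \ {x}) hux]
  by_cases hadj : G.Adj x u
  · have hxNu : x ∈ G.neighborSet u ∩ K := ⟨hadj.symm, hx⟩
    have hNu : G.neighborSet u ∩ (K \ {x}) = (G.neighborSet u ∩ K) \ {x} := by
      ext w
      simp only [Set.mem_inter_iff, Set.mem_diff, Set.mem_singleton_iff]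
      tauto
    have hcard : ((G.neighborSet u ∩ K) \ {x}).ncard + 1 = (G.neighborSet u ∩ K).ncard :=
      Set.ncard_diff_singleton_add_one hxNu ((G.neighborSet u ∩ K).toFinite)
    have h1 := (evenZ _).mp (hseen u hu)
    have h2 := (oddZ _).mp hodd
    have huK : u ∉ K \ {x} := fun h => hu (hKD h.1)
    have hz : ((((G.neighborSet u ∩ K) \ {x}).ncard : ℕ) : ZMod 2) = 1 := by
      have hc := congrArg (Nat.cast : ℕ → ZMod 2) hcard
      push_cast at hc
      rw [h1] at hc
      rw [show (1 : ZMod 2) = -1 by decide]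
      linear_combination hc
    rw [hNu, hNx, if_pos hadj, if_neg huK, hz, h2]
    decide
  · have hNu : G.neighborSet u ∩ (K \ {x}) = G.neighborSet u ∩ K := by
      ext w
      simp only [Set.mem_inter_iff, Set.mem_diff, Set.mem_singleton_iff]
      constructor
      · rintro ⟨h1, h2, _⟩; exact ⟨h1, h2⟩
      · rintro ⟨h1, h2⟩
        refine ⟨h1, h2, fun hh => hadj ?_⟩
        subst hh
        exact h1.symm
    rw [hNu, if_neg hadj, add_zero]
    exact (evenZ _).mp (hseen u hu)

/-- From odd `|N(x) ∩ K|`, the set `K \ {x}` is nonempty. -/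
lemma diff_nonempty_of_odd (G : SimpleGraph V) (K : Set V) (x : V)
    (hodd : ¬ Even ((G.neighborSet x ∩ K).ncard)) : (K \ {x}).Nonempty := by
  have hne : (G.neighborSet x ∩ K).Nonempty := by
    rw [Set.nonempty_iff_ne_empty]
    intro h
    rw [h] at hodd
    simp at hodd
  obtain ⟨y, hy1, hy2⟩ := hne
  refine ⟨y, hy2, fun hh => ?_⟩
  simp only [Set.mem_singleton_iff] at hh
  subst hh
  exact G.irrefl hy1

lemma main_rec (d : ℕ) : ∀ n (G : SimpleGraph V) (K D : Set V),
    K.Nonempty → K ⊆ D → D.ncard = d →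
    (∀ u ∉ D, Even ((G.neighborSet u ∩ K).ncard)) → K.ncard = n →
    ∃ l : List V, _root_.minDegree (l.foldl localComp G) ≤ d - 1 := by
  intro n
  induction n using Nat.strong_induction_on with
  | _ n ih =>
  intro G K D hne hKD hD hseen hcard
  by_cases hterm : ∃ x ∈ K, G.neighborSet x ⊆ D
  · obtain ⟨x, hx, hsub⟩ := hterm
    refine ⟨[], ?_⟩
    show _root_.minDegree G ≤ d - 1
    have h1 : G.neighborSet x ⊆ D \ {x} := by
      intro w hw
      refine ⟨hsub hw, fun hh => ?_⟩
      simp only [Set.mem_singleton_iff] at hh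
      subst hh
      exact G.irrefl hw
    have h2 : (G.neighborSet x).ncard ≤ (D \ {x}).ncard :=
      Set.ncard_le_ncard h1 ((D \ {x}).toFinite)
    have h3 : (D \ {x}).ncard = d - 1 := by
      rw [Set.ncard_diff_singleton_of_mem (hKD hx), hD]
    have h4 : _root_.minDegree G ≤ (G.neighborSet x).ncard := Nat.sInf_le ⟨x, rfl⟩
    omega
  · push_neg at hterm
    obtain ⟨x, hx⟩ := hne
    have hn1 : 1 ≤ n := by
      rw [← hcard]
      exact (Set.ncard_pos (K.toFinite)).mpr ⟨x, hx⟩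
    have hdiffcard : (K \ {x}).ncard = n - 1 := by
      rw [Set.ncard_diff_singleton_of_mem hx, hcard]
    by_cases hpar : Even ((G.neighborSet x ∩ K).ncard)
    · obtain ⟨v, hvN, hvD⟩ := Set.not_subset.mp (hterm x hx)
      have hadj : G.Adj v x := (G.mem_neighborSet x v).mp hvN |>.symm
      have hseen1 := stepOut G K D hKD hseen v hvD
      have hodd1 := flipOdd G K D hKD hseen x v hx hvD hadj hpar
      have hseen2 := stepIn (localComp G v) K D hKD hseen1 x hx hodd1
      have hne2 := diff_nonempty_of_odd (localComp G v) K x hodd1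
      obtain ⟨l, hl⟩ := ih (n - 1) (by omega) (localComp (localComp G v) x) (K \ {x}) D
        hne2 (fun w hw => hKD hw.1) hD hseen2 hdiffcard
      exact ⟨v :: x :: l, hl⟩
    · have hseen2 := stepIn G K D hKD hseen x hx hpar
      have hne2 := diff_nonempty_of_odd G K x hpar
      obtain ⟨l, hl⟩ := ih (n - 1) (by omega) (localComp G x) (K \ {x}) D
        hne2 (fun w hw => hKD hw.1) hD hseen2 hdiffcard
      exact ⟨x :: l, hl⟩

end Aux

/-- If a graph `G` (finite, nonempty vertex set) has a
`d`-locally evenly seen set (where `d ≥ 1`), then `δ_loc(G) ≤ d - 1`. -/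
theorem statement_1 [Fintype V] [Nonempty V] (G : SimpleGraph V) (d : ℕ) (hd : 1 ≤ d)
    (hK : ∃ K : Set V, LocallyEvenlySeen G d K) :
    minDegreeLoc G ≤ d - 1 := by
  obtain ⟨K, hne, D, hKD, hD, hseen⟩ := hK
  obtain ⟨l, hl⟩ := main_rec d K.ncard G K D hne hKD hD hseen rfl
  exact le_trans (Nat.sInf_le ⟨l, rfl⟩) hl
end

section
/- Let d ≥ 1 be an integer, let G = (V, E) be a finite simple graph with nonempty vertex set, and let K be a d-locally evenly seen set of G. Then there exists a sequence of at most 2|K| local complementations transforming G into a graph G' with δ(G') ≤ d − 1. -/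
open SimpleGraph

variable {V : Type*}

/-! ### Auxiliary lemmas -/

open Classical in
private lemma ncard_split_aux [Fintype V] (A : Set V) (v : V) :
    A.ncard = (A \ {v}).ncard + (if v ∈ A then 1 else 0) := by
  by_cases h : v ∈ A
  · simp only [h, if_true]
    exact (Set.ncard_diff_singleton_add_one h (Set.toFinite A)).symm
  · simp [h, Set.diff_singleton_eq_self h]

private lemma cast_ncard_symmDiff_aux [Fintype V] (A B : Set V) :
    (((symmDiff A B).ncard : ZMod 2)) = (A.ncard : ZMod 2) + B.ncard := by
  have h2 : (A ∩ B).ncard + (A \ B).ncard = A.ncard :=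
    Set.ncard_inter_add_ncard_diff_eq_ncard A B
  have h3 : (B ∩ A).ncard + (B \ A).ncard = B.ncard :=
    Set.ncard_inter_add_ncard_diff_eq_ncard B A
  rw [Set.symmDiff_def, Set.ncard_union_eq disjoint_sdiff_sdiff, ← h2, ← h3,
    Set.inter_comm A B]
  push_cast
  ring_nf
  rw [show (2 : ZMod 2) = 0 from rfl, mul_zero, add_zero]

open Classical in
private lemma localComp_neighborSet (G : SimpleGraph V) (a w : V) :
    (localComp G a).neighborSet w =
      if G.Adj a w then symmDiff (G.neighborSet w) (G.neighborSet a \ {w})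
      else G.neighborSet w := by
  ext x
  have e1 : G.Adj w x → ¬ x = w := fun h' e => G.irrefl (e ▸ h')
  have e3 : w = x ↔ x = w := eq_comm
  by_cases h : G.Adj a w
  · simp only [h, if_true, SimpleGraph.mem_neighborSet, Set.mem_symmDiff, Set.mem_diff,
      Set.mem_singleton_iff, localComp, true_and, ne_eq]
    tauto
  · simp only [h, if_false, SimpleGraph.mem_neighborSet, localComp, false_and, ne_eq]
    tauto

open Classical in
private lemma nu_localComp [Fintype V] (G : SimpleGraph V) (a w : V) (S : Set V) :
    (((localComp G a).neighborSet w ∩ S).ncard : ZMod 2) =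
      ((G.neighborSet w ∩ S).ncard : ZMod 2) +
      (if G.Adj a w then ((G.neighborSet a ∩ S).ncard : ZMod 2) +
        (if w ∈ S then 1 else 0) else 0) := by
  rw [localComp_neighborSet]
  by_cases h : G.Adj a w
  · simp only [h, if_true]
    have hdist : symmDiff (G.neighborSet w) (G.neighborSet a \ {w}) ∩ S =
        symmDiff (G.neighborSet w ∩ S) ((G.neighborSet a \ {w}) ∩ S) := by
      ext y; simp [Set.mem_symmDiff]; tauto
    rw [hdist, cast_ncard_symmDiff_aux]
    have hsplit := ncard_split_aux (G.neighborSet a ∩ S) w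
    have hw : w ∈ G.neighborSet a := h
    have hd : (G.neighborSet a \ {w}) ∩ S = (G.neighborSet a ∩ S) \ {w} := by
      ext y; simp [Set.mem_diff]; tauto
    rw [hd]
    by_cases hwS : w ∈ S
    · simp only [hwS, if_true, Set.mem_inter_iff, hw, true_and] at hsplit ⊢
      rw [hsplit]
      push_cast
      ring_nf
      rw [show (2 : ZMod 2) = 0 from rfl, zero_add]
    · simp only [hwS, if_false, Set.mem_inter_iff, hw, true_and, and_false,
        add_zero] at hsplit ⊢
      rw [hsplit]
  · simp [h]

private lemma localComp_adj_center (G : SimpleGraph V) (a w : V) :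
    (localComp G a).Adj w a ↔ G.Adj w a := by
  constructor
  · rintro ⟨hne, h⟩
    by_contra hwa
    exact h (iff_of_false hwa (fun h2 => G.irrefl h2.2))
  · intro hwa
    exact ⟨hwa.ne, fun h2 => G.irrefl (h2.mp hwa).2⟩

open Classical in
private lemma nu_diff_singleton [Fintype V] (H : SimpleGraph V) (x v : V) (K : Set V)
    (hv : v ∈ K) :
    ((H.neighborSet x ∩ (K \ {v})).ncard : ZMod 2) =
      ((H.neighborSet x ∩ K).ncard : ZMod 2) + (if H.Adj x v then 1 else 0) := by
  have h := ncard_split_aux (H.neighborSet x ∩ K) v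
  have he : (H.neighborSet x ∩ K) \ {v} = H.neighborSet x ∩ (K \ {v}) := by
    ext y; simp [Set.mem_diff]; tauto
  rw [he] at h
  have hmem : (v ∈ H.neighborSet x ∩ K) ↔ H.Adj x v := by
    simp [hv]
  by_cases hadj : H.Adj x v
  · rw [if_pos hadj]
    have hvm : v ∈ H.neighborSet x ∩ K := hmem.mpr hadj
    rw [if_pos hvm] at h
    rw [h]
    push_cast
    ring_nf
    rw [show (2 : ZMod 2) = 0 from rfl, zero_add]
  · have hvm : v ∉ H.neighborSet x ∩ K := fun t => hadj (hmem.mp t)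
    rw [if_neg hvm, add_zero] at h
    simp [hadj, h]

-- Key reduction: if `|N(v) ∩ K|` is odd, then after complementing at `v`,
-- the set `K \ {v}` is evenly seen outside `D`, and it is nonempty.
open Classical in
private lemma reduction [Fintype V] (G : SimpleGraph V) (D K : Set V) (v : V)
    (hKD : K ⊆ D) (hvD : v ∈ D) (hvK : v ∈ K)
    (H : ∀ w ∉ D, ((G.neighborSet w ∩ K).ncard : ZMod 2) = 0)
    (hodd : ((G.neighborSet v ∩ K).ncard : ZMod 2) = 1) :
    (K \ {v}).Nonempty ∧
      ∀ w ∉ D, (((localComp G v).neighborSet w ∩ (K \ {v})).ncard : ZMod 2) = 0 := by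
  constructor
  · have hne : (G.neighborSet v ∩ K).ncard ≠ 0 := by
      intro h0
      rw [h0] at hodd
      exact one_ne_zero hodd.symm
    obtain ⟨k, hk⟩ := Set.nonempty_of_ncard_ne_zero hne
    refine ⟨k, hk.2, ?_⟩
    intro hkv
    rw [Set.mem_singleton_iff] at hkv
    subst hkv
    exact G.irrefl hk.1
  · intro w hw
    have hwK : w ∉ K := fun t => hw (hKD t)
    rw [nu_diff_singleton _ _ _ _ hvK, nu_localComp]
    have hc : (localComp G v).Adj w v ↔ G.Adj w v := localComp_adj_center G v w
    by_cases hadj : G.Adj v w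
    · have hadj' : G.Adj w v := hadj.symm
      rw [if_pos hadj, if_pos (hc.mpr hadj'), H w hw, hodd, if_neg hwK]
      ring_nf
      rw [show (2 : ZMod 2) = 0 from rfl]
    · have hadj' : ¬ G.Adj w v := fun t => hadj t.symm
      rw [if_neg hadj, if_neg (fun t => hadj' (hc.mp t)), H w hw, add_zero, add_zero]

open Classical in
private lemma aux_main [Fintype V] (D : Set V) :
    ∀ (n : ℕ) (G : SimpleGraph V) (K : Set V), K.ncard ≤ n → K.Nonempty → K ⊆ D →
      (∀ w ∉ D, ((G.neighborSet w ∩ K).ncard : ZMod 2) = 0) →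
      ∃ l : List V, l.length ≤ 2 * K.ncard ∧
        _root_.minDegree (l.foldl localComp G) ≤ D.ncard - 1 := by
  intro n
  induction n with
  | zero =>
    intro G K hn hne hKD H
    have := (Set.ncard_pos (Set.toFinite K)).mpr hne
    omega
  | succ n ih =>
    intro G K hn hne hKD H
    obtain ⟨v, hv⟩ := hne
    have hKpos : 1 ≤ K.ncard := (Set.ncard_pos (Set.toFinite K)).mpr ⟨v, hv⟩
    have hKcard : (K \ {v}).ncard = K.ncard - 1 :=
      Set.ncard_diff_singleton_of_mem hv
    by_cases hodd : ((G.neighborSet v ∩ K).ncard : ZMod 2) = 0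
    · by_cases hsub : G.neighborSet v ⊆ D
      · refine ⟨[], by simp, ?_⟩
        have h1 : G.neighborSet v ⊆ D \ {v} := by
          intro x hx
          refine ⟨hsub hx, ?_⟩
          intro hxv
          rw [Set.mem_singleton_iff] at hxv
          subst hxv
          exact G.irrefl hx
        have h2 : (G.neighborSet v).ncard ≤ (D \ {v}).ncard :=
          Set.ncard_le_ncard h1 (Set.toFinite _)
        have h3 : (D \ {v}).ncard = D.ncard - 1 :=
          Set.ncard_diff_singleton_of_mem (hKD hv)
        have h4 : _root_.minDegree G ≤ (G.neighborSet v).ncard :=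
          Nat.sInf_le ⟨v, rfl⟩
        simpa using le_trans h4 (h3 ▸ h2)
      · rw [Set.not_subset] at hsub
        obtain ⟨u, hu, huD⟩ := hsub
        have huv : G.Adj u v := hu.symm
        have huK : u ∉ K := fun t => huD (hKD t)
        set G1 := localComp G u with hG1
        have H1 : ∀ w ∉ D, ((G1.neighborSet w ∩ K).ncard : ZMod 2) = 0 := by
          intro w hw
          have hwK : w ∉ K := fun t => hw (hKD t)
          rw [hG1, nu_localComp, H w hw]
          by_cases huw : G.Adj u w
          · rw [if_pos huw, H u huD, if_neg hwK]
            ring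
          · rw [if_neg huw, add_zero]
        have hodd1 : ((G1.neighborSet v ∩ K).ncard : ZMod 2) = 1 := by
          rw [hG1, nu_localComp, hodd, if_pos huv, H u huD, if_pos hv]
          ring
        obtain ⟨hne', H2⟩ := reduction G1 D K v hKD (hKD hv) hv H1 hodd1
        obtain ⟨l, hl, hmin⟩ := ih (localComp G1 v) (K \ {v}) (by omega)
          hne' (Set.diff_subset.trans hKD) H2
        refine ⟨u :: v :: l, ?_, ?_⟩
        · simp only [List.length_cons]
          omega
        · exact hmin
    · have hodd' : ((G.neighborSet v ∩ K).ncard : ZMod 2) = 1 := by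
        have h01 : ∀ x : ZMod 2, x = 0 ∨ x = 1 := by decide
        rcases h01 (((G.neighborSet v ∩ K).ncard : ZMod 2)) with h | h
        · exact absurd h hodd
        · exact h
      obtain ⟨hne', H2⟩ := reduction G D K v hKD (hKD hv) hv H hodd'
      obtain ⟨l, hl, hmin⟩ := ih (localComp G v) (K \ {v}) (by omega)
        hne' (Set.diff_subset.trans hKD) H2
      refine ⟨v :: l, ?_, ?_⟩
      · simp only [List.length_cons]
        omega
      · exact hmin

/-- If `K` is a `d`-locally evenly seen set of `G` (with `d ≥ 1`),
then there is a sequence of at most `2|K|` local complementations transforming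
`G` into a graph `G'` with `δ(G') ≤ d - 1`. -/
theorem statement_2 [Fintype V] [Nonempty V] (G : SimpleGraph V) (d : ℕ) (hd : 1 ≤ d)
    (K : Set V) (hK : LocallyEvenlySeen G d K) :
    ∃ l : List V, l.length ≤ 2 * K.ncard ∧ minDegree (l.foldl localComp G) ≤ d - 1 := by
  obtain ⟨hne, D, hKD, hDcard, hH⟩ := hK
  have H : ∀ w ∉ D, ((G.neighborSet w ∩ K).ncard : ZMod 2) = 0 := by
    intro w hw
    rw [ZMod.natCast_eq_zero_iff]
    exact (hH w hw).two_dvd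
  obtain ⟨l, hl, hmin⟩ := aux_main D K.ncard G K le_rfl hne hKD H
  exact ⟨l, hl, hDcard ▸ hmin⟩
end

section
/- Let G = (V, E) be a finite simple graph, v ∈ V a vertex, and d an integer. Then G has a d-locally evenly seen set if and only if λ_v(G) has a d-locally evenly seen set. -/
open SimpleGraph

variable {V : Type*}

open symmDiff

lemma localComp_adj (G : SimpleGraph V) (v u w : V) :
    (localComp G v).Adj u w ↔ u ≠ w ∧ ¬ (G.Adj u w ↔ (G.Adj v u ∧ G.Adj v w)) :=
  Iff.rfl

lemma adj_localComp_left (G : SimpleGraph V) (v u : V) :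
    (localComp G v).Adj v u ↔ G.Adj v u := by
  rw [localComp_adj]
  have h1 : ¬ G.Adj v v := G.loopless.irrefl v
  constructor
  · rintro ⟨-, hv⟩; tauto
  · intro h; exact ⟨(G.ne_of_adj h), by tauto⟩

lemma localComp_involutive (G : SimpleGraph V) (v : V) :
    localComp (localComp G v) v = G := by
  ext u w
  rw [localComp_adj, adj_localComp_left, adj_localComp_left, localComp_adj]
  constructor
  · rintro ⟨hne, hv⟩
    by_cases hu : G.Adj v u <;> by_cases hw : G.Adj v w <;> tauto
  · intro hadj
    have hne : ¬ u = w := G.ne_of_adj hadj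
    refine ⟨hne, ?_⟩
    by_cases hu : G.Adj v u <;> by_cases hw : G.Adj v w <;> tauto

lemma neighborSet_localComp_of_not_adj (G : SimpleGraph V) {v u : V}
    (h : ¬ G.Adj v u) : (localComp G v).neighborSet u = G.neighborSet u := by
  ext w
  simp only [SimpleGraph.mem_neighborSet, localComp_adj]
  constructor
  · rintro ⟨-, hv⟩; tauto
  · intro hadj
    exact ⟨G.ne_of_adj hadj, by tauto⟩

lemma neighborSet_localComp_of_adj (G : SimpleGraph V) {v u : V}
    (h : G.Adj v u) :
    (localComp G v).neighborSet u =
      (G.neighborSet u ∆ G.neighborSet v) \ {u} := by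
  ext w
  simp only [SimpleGraph.mem_neighborSet, localComp_adj, Set.mem_diff,
    Set.mem_symmDiff, SimpleGraph.mem_neighborSet, Set.mem_singleton_iff]
  constructor
  · rintro ⟨hne, hv⟩
    refine ⟨?_, fun h' => hne h'.symm⟩
    tauto
  · rintro ⟨hw, hne⟩
    refine ⟨fun h' => hne h'.symm, ?_⟩
    tauto

lemma even_ncard_symmDiff [Fintype V] (A B : Set V) :
    Even ((A ∆ B).ncard) ↔ (Even A.ncard ↔ Even B.ncard) := by
  have hd : Disjoint (A ∆ B) (A ∩ B) := disjoint_symmDiff_inf A B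
  have h1 : (A ∆ B) ∪ (A ∩ B) = A ∪ B := by
    rw [show (A ∆ B) ∪ (A ∩ B) = (A ∆ B) ∆ (A ∩ B) from (hd.symmDiff_eq_sup).symm]
    exact symmDiff_symmDiff_inf A B
  have h2 : (A ∆ B).ncard + (A ∩ B).ncard = (A ∪ B).ncard := by
    rw [← Set.ncard_union_eq hd (Set.toFinite _) (Set.toFinite _), h1]
  have h3 : (A ∪ B).ncard + (A ∩ B).ncard = A.ncard + B.ncard :=
    Set.ncard_union_add_ncard_inter A B (Set.toFinite _) (Set.toFinite _)
  have h4 : (A ∆ B).ncard + 2 * (A ∩ B).ncard = A.ncard + B.ncard := by omega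
  have h5 : Even ((A ∆ B).ncard) ↔ Even (A.ncard + B.ncard) := by
    rw [← h4]; simp [Nat.even_add]
  rw [h5, Nat.even_add]

lemma adj_localComp_right (G : SimpleGraph V) (v u : V) :
    (localComp G v).Adj u v ↔ G.Adj u v := by
  simp only [localComp_adj]
  have h1 : ¬ G.Adj v v := G.loopless.irrefl v
  constructor
  · rintro ⟨-, hv⟩; tauto
  · intro h; exact ⟨G.ne_of_adj h, by tauto⟩

/-- One direction: a `d`-locally evenly seen set survives local complementation. -/
lemma locallyEvenlySeen_localComp [Fintype V] (G : SimpleGraph V) (v : V) (d : ℕ)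
    (h : ∃ K : Set V, LocallyEvenlySeen G d K) :
    ∃ K : Set V, LocallyEvenlySeen (localComp G v) d K := by
  obtain ⟨K, hK, D, hKD, hD, hEven⟩ := h
  by_cases hpar : Even ((G.neighborSet v ∩ K).ncard)
  · refine ⟨K, hK, D, hKD, hD, fun u hu => ?_⟩
    by_cases hv : G.Adj v u
    · rw [neighborSet_localComp_of_adj G hv]
      have huK : u ∉ K := fun h' => hu (hKD h')
      have heq : ((G.neighborSet u ∆ G.neighborSet v) \ {u}) ∩ K =
          (G.neighborSet u ∩ K) ∆ (G.neighborSet v ∩ K) := by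
        ext x
        by_cases hxu : x = u
        · subst hxu
          simp [Set.mem_symmDiff, huK]
        · simp only [Set.mem_inter_iff, Set.mem_diff, Set.mem_singleton_iff,
            Set.mem_symmDiff]
          tauto
      rw [heq, even_ncard_symmDiff]
      constructor <;> intro <;> [exact hpar; exact hEven u hu]
    · rw [neighborSet_localComp_of_not_adj G hv]
      exact hEven u hu
  · have hvD : v ∈ D := by
      by_contra hvD
      exact hpar (hEven v hvD)
    have hodd : (G.neighborSet v ∩ K).Nonempty := by
      apply Set.nonempty_of_ncard_ne_zero
      intro h0
      exact hpar (h0 ▸ Even.zero)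
    obtain ⟨w, hwN, hwK⟩ := hodd
    have hwv : w ≠ v := fun h' => G.loopless.irrefl v (h' ▸ hwN)
    refine ⟨K ∆ {v}, ⟨w, ?_⟩, D, ?_, hD, ?_⟩
    · rw [Set.mem_symmDiff]
      left
      exact ⟨hwK, fun h' => hwv h'⟩
    · intro x hx
      rw [Set.mem_symmDiff] at hx
      rcases hx with ⟨hxK, -⟩ | ⟨hxv, -⟩
      · exact hKD hxK
      · exact hxv ▸ hvD
    · intro u hu
      have huK : u ∉ K := fun h' => hu (hKD h')
      have huv : u ≠ v := fun h' => hu (h' ▸ hvD)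
      have heq : (localComp G v).neighborSet u ∩ (K ∆ {v}) =
          ((localComp G v).neighborSet u ∩ K) ∆ ((localComp G v).neighborSet u ∩ {v}) := by
        ext x
        simp only [Set.mem_inter_iff, Set.mem_symmDiff, Set.mem_singleton_iff]
        tauto
      rw [heq, even_ncard_symmDiff]
      by_cases hv : G.Adj v u
      · have hadjuv : (localComp G v).Adj u v := (adj_localComp_right G v u).2 (G.adj_symm hv)
        have hsing : (localComp G v).neighborSet u ∩ {v} = {v} := by
          ext x
          simp only [Set.mem_inter_iff, Set.mem_singleton_iff, SimpleGraph.mem_neighborSet]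
          constructor
          · rintro ⟨-, h'⟩; exact h'
          · intro h'
            exact ⟨by rw [h']; exact hadjuv, h'⟩
        have hnK : ¬ Even (((localComp G v).neighborSet u ∩ K).ncard) := by
          rw [neighborSet_localComp_of_adj G hv]
          have heq2 : ((G.neighborSet u ∆ G.neighborSet v) \ {u}) ∩ K =
              (G.neighborSet u ∩ K) ∆ (G.neighborSet v ∩ K) := by
            ext x
            by_cases hxu : x = u
            · subst hxu
              simp [Set.mem_symmDiff, huK]
            · simp only [Set.mem_inter_iff, Set.mem_diff, Set.mem_singleton_iff,
                Set.mem_symmDiff]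
              tauto
          rw [heq2, even_ncard_symmDiff]
          intro hiff
          exact hpar (hiff.1 (hEven u hu))
        have hnV : ¬ Even (((localComp G v).neighborSet u ∩ {v}).ncard) := by
          rw [hsing, Set.ncard_singleton]
          simp
        tauto
      · have hempty : (localComp G v).neighborSet u ∩ {v} = ∅ := by
          ext x
          simp only [Set.mem_inter_iff, Set.mem_singleton_iff, SimpleGraph.mem_neighborSet,
            Set.mem_empty_iff_false, iff_false, not_and]
          intro h' hx
          exact hv (G.adj_symm ((adj_localComp_right G v u).1 (hx ▸ h')))
        have hK' : Even (((localComp G v).neighborSet u ∩ K).ncard) := by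
          rw [neighborSet_localComp_of_not_adj G hv]
          exact hEven u hu
        have hV' : Even (((localComp G v).neighborSet u ∩ {v}).ncard) := by
          rw [hempty]; simp
        tauto

/-- `G` has a `d`-locally evenly seen set iff `λ_v(G)` has a
`d`-locally evenly seen set. -/
theorem statement_5 [Fintype V] (G : SimpleGraph V) (v : V) (d : ℕ) :
    (∃ K : Set V, LocallyEvenlySeen G d K) ↔
      (∃ K : Set V, LocallyEvenlySeen (localComp G v) d K) := by
  constructor
  · exact locallyEvenlySeen_localComp G v d
  · intro h
    have := locallyEvenlySeen_localComp (localComp G v) v d h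
    rwa [localComp_involutive] at this
end

section
/- Let G = (V, E) be a finite simple graph with δ(G) = δ_loc(G) = d, and let D ⊆ V with |D| = d. Then for every nonempty subset K ⊆ D there exists a vertex u ∈ V \ D such that |N_G(u) ∩ K| is odd. -/
open SimpleGraph

variable {V : Type*}

namespace Stmt9Aux

open Finset

open Classical in
noncomputable def ind (p : Prop) : ZMod 2 := if p then 1 else 0

lemma ind_pos {p : Prop} (h : p) : ind p = 1 := by simp [ind, h]
lemma ind_neg {p : Prop} (h : ¬p) : ind p = 0 := by simp [ind, h]
lemma ind_congr {p q : Prop} (h : p ↔ q) : ind p = ind q := by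
  by_cases hq : q
  · rw [ind_pos (h.mpr hq), ind_pos hq]
  · rw [ind_neg (fun hp => hq (h.mp hp)), ind_neg hq]

lemma zmod2_cases (x : ZMod 2) : x = 0 ∨ x = 1 := by revert x; decide

noncomputable def par [Fintype V] (G : SimpleGraph V) (K : Set V) (u : V) : ZMod 2 :=
  ∑ w : V, ind (G.Adj u w ∧ w ∈ K)

lemma par_eq_card [Fintype V] (G : SimpleGraph V) (K : Set V) (u : V) :
    par G K u = ((G.neighborSet u ∩ K).ncard : ZMod 2) := by
  classical
  have h1 : G.neighborSet u ∩ K = ↑(Finset.univ.filter fun w => G.Adj u w ∧ w ∈ K) := by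
    ext w; simp [SimpleGraph.mem_neighborSet]
  rw [h1, Set.ncard_coe_finset, ← Finset.sum_boole]
  refine Finset.sum_congr rfl fun w _ => ?_
  by_cases h : G.Adj u w ∧ w ∈ K <;> simp [ind, h]

lemma natCast_zmod2_eq_one_iff (n : ℕ) : (n : ZMod 2) = 1 ↔ Odd n := by
  rw [Nat.odd_iff, ← ZMod.natCast_mod n 2]
  rcases Nat.mod_two_eq_zero_or_one n with h | h <;> rw [h] <;> simp <;> decide

lemma odd_iff_par [Fintype V] (G : SimpleGraph V) (K : Set V) (u : V) :
    Odd ((G.neighborSet u ∩ K).ncard) ↔ par G K u = 1 := by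
  rw [par_eq_card, natCast_zmod2_eq_one_iff]

lemma localComp_adj_right (G : SimpleGraph V) (v u : V) :
    (localComp G v).Adj u v ↔ G.Adj u v := by
  have hvv : ¬ G.Adj v v := G.irrefl
  constructor
  · rintro ⟨h1, h2⟩
    by_contra h; exact h2 (by tauto)
  · intro h
    exact ⟨G.ne_of_adj h, by tauto⟩

lemma par_localComp [Fintype V] (G : SimpleGraph V) (v : V) (K : Set V) (u : V) :
    par (localComp G v) K u =
      par G K u + ind (G.Adj v u) * (par G K v + ind (u ∈ K)) := by
  classical
  have key : ∀ w : V, ind ((localComp G v).Adj u w ∧ w ∈ K) =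
      ind (G.Adj u w ∧ w ∈ K) + ind (G.Adj v u) * ind (G.Adj v w ∧ w ∈ K)
        + ind (w = u) * (ind (G.Adj v u) * ind (u ∈ K)) := by
    intro w
    by_cases h4 : w = u
    · subst h4
      have hA : ¬ G.Adj w w := G.irrefl
      have hA' : ¬ (localComp G v).Adj w w := (localComp G v).irrefl
      by_cases hB : G.Adj v w <;> by_cases hE : w ∈ K <;>
        simp [ind, hA, hA', hB, hE] <;> decide
    · have h4' : u ≠ w := fun h => h4 h.symm
      by_cases h1 : G.Adj u w <;> by_cases h2 : G.Adj v u <;> by_cases h3 : G.Adj v w <;>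
        by_cases h5 : w ∈ K <;>
        simp [ind, localComp, h1, h2, h3, h5, h4, h4'] <;> decide
  calc par (localComp G v) K u
      = ∑ w : V, (ind (G.Adj u w ∧ w ∈ K) + ind (G.Adj v u) * ind (G.Adj v w ∧ w ∈ K)
        + ind (w = u) * (ind (G.Adj v u) * ind (u ∈ K))) :=
        Finset.sum_congr rfl fun w _ => key w
    _ = par G K u + ind (G.Adj v u) * (par G K v + ind (u ∈ K)) := by
        rw [Finset.sum_add_distrib, Finset.sum_add_distrib, ← Finset.mul_sum]
        have h6 : (∑ w : V, ind (w = u) * (ind (G.Adj v u) * ind (u ∈ K)))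
            = ind (G.Adj v u) * ind (u ∈ K) := by
          rw [Finset.sum_eq_single u]
          · rw [ind_pos rfl, one_mul]
          · intro b _ hb; rw [ind_neg hb, zero_mul]
          · intro h; exact absurd (Finset.mem_univ u) h
        rw [h6]
        unfold par
        ring

lemma par_diff_singleton [Fintype V] (G : SimpleGraph V) (K : Set V) (v u : V) :
    par G (K \ {v}) u = par G K u + ind (G.Adj u v ∧ v ∈ K) := by
  classical
  have key : ∀ w : V, ind (G.Adj u w ∧ w ∈ K \ {v}) =
      ind (G.Adj u w ∧ w ∈ K) + ind (w = v) * ind (G.Adj u v ∧ v ∈ K) := by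
    intro w
    by_cases h4 : w = v
    · subst h4
      have h5 : w ∉ K \ {w} := by simp
      rw [ind_neg (fun h => h5 h.2), ind_pos rfl, one_mul]
      by_cases h : G.Adj u w ∧ w ∈ K
      · rw [ind_pos h]; decide
      · rw [ind_neg h]; decide
    · rw [ind_neg h4, zero_mul, add_zero]
      exact ind_congr (by simp [Set.mem_diff, h4])
  calc par G (K \ {v}) u
      = ∑ w : V, (ind (G.Adj u w ∧ w ∈ K) + ind (w = v) * ind (G.Adj u v ∧ v ∈ K)) :=
        Finset.sum_congr rfl fun w _ => key w
    _ = par G K u + ind (G.Adj u v ∧ v ∈ K) := by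
        rw [Finset.sum_add_distrib]
        have h6 : (∑ w : V, ind (w = v) * ind (G.Adj u v ∧ v ∈ K))
            = ind (G.Adj u v ∧ v ∈ K) := by
          rw [Finset.sum_eq_single v]
          · rw [ind_pos rfl, one_mul]
          · intro b _ hb; rw [ind_neg hb, zero_mul]
          · intro h; exact absurd (Finset.mem_univ v) h
        rw [h6]; rfl

lemma exists_of_par_one [Fintype V] {G : SimpleGraph V} {K : Set V} {v : V}
    (h : par G K v = 1) : ∃ x, G.Adj v x ∧ x ∈ K := by
  by_contra hc
  push_neg at hc
  have h0 : par G K v = 0 :=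
    Finset.sum_eq_zero fun x _ => ind_neg (fun hx => hc x hx.1 hx.2)
  rw [h0] at h
  exact absurd h (by decide)


lemma step [Fintype V] (D : Set V) (G : SimpleGraph V) (K : Set V) (v : V)
    (hKD : K ⊆ D) (hvK : v ∈ K) (hv1 : par G K v = 1)
    (hDh : ∀ u, u ∉ D → par G K u = 0) :
    (K \ {v}).Nonempty ∧ (K \ {v}) ⊆ D ∧
      (∀ u, u ∉ D → par (localComp G v) (K \ {v}) u = 0) := by
  obtain ⟨x, hax, hxK⟩ := exists_of_par_one hv1
  have hxv : x ≠ v := fun h => (G.ne_of_adj hax) h.symm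
  refine ⟨⟨x, hxK, by simp [hxv]⟩, Set.diff_subset.trans hKD, ?_⟩
  intro u hu
  have huK : u ∉ K := fun h => hu (hKD h)
  have e2 : ind ((localComp G v).Adj u v ∧ v ∈ K) = ind (G.Adj v u) := by
    refine ind_congr ?_
    rw [localComp_adj_right]
    simp [hvK, G.adj_comm u v]
  rw [par_diff_singleton, par_localComp, hv1, hDh u hu, ind_neg huK, e2]
  rcases zmod2_cases (ind (G.Adj v u)) with h | h <;> rw [h] <;> decide

lemma main [Fintype V] (D : Set V) :
    ∀ (n : ℕ) (G : SimpleGraph V) (K : Set V), K.Nonempty → K ⊆ D → K.ncard ≤ n →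
      (∀ u, u ∉ D → par G K u = 0) →
      ∃ l : List V, minDegree (l.foldl localComp G) < D.ncard := by
  intro n
  induction n with
  | zero =>
    intro G K hne hKD hcard _
    rw [Nat.le_zero, Set.ncard_eq_zero] at hcard
    exact absurd hcard (Set.nonempty_iff_ne_empty.mp hne)
  | succ n ih =>
    intro G K hne hKD hcard hDh
    have hKn : K.ncard ≤ n + 1 := hcard
    by_cases hi : ∃ v ∈ K, par G K v = 1
    · obtain ⟨v, hvK, hv1⟩ := hi
      obtain ⟨hne', hKD', hDh'⟩ := step D G K v hKD hvK hv1 hDh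
      have hcard' : (K \ {v}).ncard ≤ n := by
        rw [Set.ncard_diff_singleton_of_mem hvK]; omega
      obtain ⟨l, hl⟩ := ih (localComp G v) (K \ {v}) hne' hKD' hcard' hDh'
      exact ⟨v :: l, hl⟩
    · push_neg at hi
      have hK0 : ∀ v ∈ K, par G K v = 0 := fun v hv =>
        (zmod2_cases _).resolve_right (hi v hv)
      by_cases hii : ∃ u, par G K u = 0 ∧ ∃ w, G.Adj u w ∧ w ∈ K
      · obtain ⟨u₀, hu0, w, haw, hwK⟩ := hii
        set G' := localComp G u₀ with hG'
        have key : ∀ x, par G' K x = par G K x + ind (G.Adj u₀ x) * ind (x ∈ K) := by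
          intro x; rw [hG', par_localComp, hu0, zero_add]
        have hw1 : par G' K w = 1 := by
          rw [key, hK0 w hwK, ind_pos haw, ind_pos hwK]; decide
        have hDh'' : ∀ x, x ∉ D → par G' K x = 0 := by
          intro x hx
          rw [key, hDh x hx, ind_neg (fun h : x ∈ K => hx (hKD h)), mul_zero, add_zero]
        obtain ⟨hne', hKD', hDh'⟩ := step D G' K w hKD hwK hw1 hDh''
        have hcard' : (K \ {w}).ncard ≤ n := by
          rw [Set.ncard_diff_singleton_of_mem hwK]; omega
        obtain ⟨l, hl⟩ := ih (localComp G' w) (K \ {w}) hne' hKD' hcard' hDh'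
        exact ⟨u₀ :: w :: l, hl⟩
      · push_neg at hii
        obtain ⟨w₀, hw₀⟩ := hne
        have hsub : G.neighborSet w₀ ⊆ D \ K := by
          intro x hx
          have hax : G.Adj w₀ x := hx
          have hx1 : par G K x = 1 := by
            rcases zmod2_cases (par G K x) with h | h
            · exact absurd hw₀ (hii x h w₀ (G.adj_comm w₀ x |>.mp hax))
            · exact h
          have hxK : x ∉ K := fun h => by rw [hK0 x h] at hx1; exact absurd hx1 (by decide)
          have hxD : x ∈ D := by
            by_contra h
            rw [hDh x h] at hx1; exact absurd hx1 (by decide)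
          exact ⟨hxD, hxK⟩
        refine ⟨[], ?_⟩
        have h1 : minDegree G ≤ (G.neighborSet w₀).ncard := Nat.sInf_le ⟨w₀, rfl⟩
        have h2 : (G.neighborSet w₀).ncard ≤ (D \ K).ncard :=
          Set.ncard_le_ncard hsub (Set.toFinite _)
        have h3 : (D \ K).ncard = D.ncard - K.ncard := Set.ncard_diff hKD
        have h4 : 0 < K.ncard := (Set.ncard_pos).mpr ⟨w₀, hw₀⟩
        have h5 : K.ncard ≤ D.ncard := Set.ncard_le_ncard hKD (Set.toFinite _)
        simp only [List.foldl_nil]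
        omega

end Stmt9Aux


/-- If `δ(G) = δ_loc(G) = d` and `|D| = d`, then every nonempty
subset `K ⊆ D` is seen oddly by some vertex outside `D`. -/
theorem statement_9 [Fintype V] (G : SimpleGraph V) (d : ℕ)
    (h1 : minDegree G = d) (h2 : minDegreeLoc G = d)
    (D : Set V) (hD : D.ncard = d)
    (K : Set V) (hKD : K ⊆ D) (hK : K.Nonempty) :
    ∃ u ∉ D, Odd ((G.neighborSet u ∩ K).ncard) := by
  classical
  by_contra hcon
  push_neg at hcon
  have hDh : ∀ u, u ∉ D → Stmt9Aux.par G K u = 0 := by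
    intro u hu
    have h := hcon u hu
    rw [Stmt9Aux.odd_iff_par] at h
    exact (Stmt9Aux.zmod2_cases _).resolve_right h
  obtain ⟨l, hl⟩ := Stmt9Aux.main D K.ncard G K hK hKD le_rfl hDh
  have hle : minDegreeLoc G ≤ _root_.minDegree (l.foldl localComp G) := Nat.sInf_le ⟨l, rfl⟩
  rw [hD] at hl
  omega
end

section
/- Let G = (V, E) be a finite simple graph and let K ⊆ D ⊆ V be such that every vertex u ∈ V \ D has an even number of neighbors in K. Let v ∈ K be such that |N_G(v) ∩ K| is odd, and set G' = λ_v(G). Then every vertex u ∈ V \ D has an even number of neighbors in K \ {v} in the graph G'. -/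
open SimpleGraph
open scoped symmDiff

variable {V : Type*}

lemma card_symmDiff_key {α : Type*} [DecidableEq α] (s t : Finset α) :
    (s ∆ t).card + 2 * (s ∩ t).card = s.card + t.card := by
  have h1 : (s ∆ t).card = (s \ t).card + (t \ s).card := by
    rw [symmDiff_def, Finset.sup_eq_union, Finset.card_union_of_disjoint]
    exact disjoint_sdiff_sdiff
  have h2 := Finset.card_sdiff_add_card_inter s t
  have h3 := Finset.card_sdiff_add_card_inter t s
  rw [Finset.inter_comm] at h3
  omega

/-- If every vertex outside `D` sees `K ⊆ D` evenly and
`v ∈ K` has an odd number of neighbors in `K`, then after local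
complementation at `v`, every vertex outside `D` sees `K \ {v}` evenly. -/
theorem statement_13 [Fintype V] (G : SimpleGraph V) (K D : Set V) (hKD : K ⊆ D)
    (hseen : ∀ u ∉ D, Even ((G.neighborSet u ∩ K).ncard))
    (v : V) (hv : v ∈ K) (hodd : Odd ((G.neighborSet v ∩ K).ncard)) :
    ∀ u ∉ D, Even (((localComp G v).neighborSet u ∩ (K \ {v})).ncard) := by
  classical
  intro u hu
  have huK : u ∉ K := fun h => hu (hKD h)
  have hA := hseen u hu
  set A := G.neighborSet u ∩ K with hAdef
  set B := G.neighborSet v ∩ K with hBdef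
  by_cases hvu : G.Adj v u
  · have hset : (localComp G v).neighborSet u ∩ (K \ {v}) = (A ∆ B) \ {v} := by
      ext w
      have h1 : G.Adj u w → u ≠ w := G.ne_of_adj
      have h2 : w ∈ K → u ≠ w := fun hw he => huK (he ▸ hw)
      simp only [localComp, neighborSet, Set.mem_inter_iff, Set.mem_diff,
        Set.mem_singleton_iff, Set.mem_symmDiff, Set.mem_setOf_eq, hAdef, hBdef]
      constructor
      · rintro ⟨⟨hne, hiff⟩, hwK, hwv⟩
        refine ⟨?_, hwv⟩
        by_cases h : G.Adj u w <;> tauto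
      · rintro ⟨h, hwv⟩
        rcases h with ⟨⟨h1', h2'⟩, h3'⟩ | ⟨⟨h1', h2'⟩, h3'⟩ <;>
          exact ⟨⟨by tauto, by tauto⟩, by tauto, hwv⟩
    rw [hset]
    have hvAB : v ∈ A ∆ B := by
      have hvA : v ∈ A := ⟨G.adj_symm hvu, hv⟩
      have hvB : v ∉ B := fun h => G.irrefl h.1
      exact Or.inl ⟨hvA, hvB⟩
    rw [Set.ncard_diff_singleton_of_mem hvAB]
    have hoddAB : Odd ((A ∆ B).ncard) := by
      have key := card_symmDiff_key A.toFinset B.toFinset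
      have e1 : (A ∆ B).ncard = (A.toFinset ∆ B.toFinset).card := by
        rw [Set.ncard_eq_toFinset_card']
        congr 1
        simp [Set.toFinset_symmDiff]
      have e2 : A.ncard = A.toFinset.card := Set.ncard_eq_toFinset_card' A
      have e3 : B.ncard = B.toFinset.card := Set.ncard_eq_toFinset_card' B
      rcases hA with ⟨a, ha⟩
      rcases hodd with ⟨b, hb⟩
      refine ⟨a + b - (A.toFinset ∩ B.toFinset).card, by omega⟩
    rcases hoddAB with ⟨k, hk⟩
    have hpos : 1 ≤ (A ∆ B).ncard := by omega
    exact ⟨k, by omega⟩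
  · have hset : (localComp G v).neighborSet u ∩ (K \ {v}) = A := by
      ext w
      have h3 : G.Adj u w → w = v → False := fun h he => hvu (G.adj_symm (he ▸ h))
      have h1 : G.Adj u w → u ≠ w := G.ne_of_adj
      simp only [localComp, neighborSet, Set.mem_inter_iff, Set.mem_diff,
        Set.mem_singleton_iff, Set.mem_setOf_eq, hAdef]
      tauto
    rw [hset]
    exact hA
end

section
/- Let G = (V, E) be a finite simple graph and let K ⊆ D ⊆ V be such that every vertex of V \ D has an even number of neighbors in K. Let u ∈ V \ D and v ∈ N_G(u) ∩ K, and set G' = λ_u(G). Then (i) every vertex of V \ D has an even number of neighbors in K in the graph G', and (ii) |N_{G'}(v) ∩ K| and |N_G(v) ∩ K| have opposite parities. -/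
open SimpleGraph

variable {V : Type*}

lemma even_ncard_symmDiff_iff [Fintype V] (A B : Set V) :
    Even ((symmDiff A B).ncard) ↔ (Even A.ncard ↔ Even B.ncard) := by
  have hA : A.Finite := Set.toFinite A
  have hB : B.Finite := Set.toFinite B
  have h1 : (A ∪ B).ncard + (A ∩ B).ncard = A.ncard + B.ncard :=
    Set.ncard_union_add_ncard_inter A B hA hB
  have hsub : A ∩ B ⊆ A ∪ B := (Set.inter_subset_left).trans Set.subset_union_left
  have h2 : (symmDiff A B).ncard = (A ∪ B).ncard - (A ∩ B).ncard := by
    rw [symmDiff_eq_sup_sdiff_inf]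
    exact Set.ncard_diff hsub (hA.inter_of_left B)
  have h3 : (A ∩ B).ncard ≤ (A ∪ B).ncard := Set.ncard_le_ncard hsub (hA.union hB)
  simp only [Nat.even_iff] at *
  omega

lemma localComp_nbhd_inter {G : SimpleGraph V} {u x : V} {K : Set V}
    (hx : x ∉ K) (hux : G.Adj u x) :
    (localComp G u).neighborSet x ∩ K =
      symmDiff (G.neighborSet x ∩ K) (G.neighborSet u ∩ K) := by
  ext w
  by_cases hwx : w = x
  · subst hwx
    simp only [Set.mem_inter_iff, Set.mem_symmDiff, mem_neighborSet]
    constructor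
    · rintro ⟨h, hw⟩; exact absurd hw hx
    · rintro (⟨⟨_, hw⟩, _⟩ | ⟨⟨_, hw⟩, _⟩) <;> exact absurd hw hx
  · simp only [Set.mem_inter_iff, Set.mem_symmDiff, mem_neighborSet, localComp]
    have := hux
    constructor
    · rintro ⟨⟨hne, h⟩, hwK⟩
      by_cases h1 : G.Adj x w <;> by_cases h2 : G.Adj u w <;> tauto
    · rintro (⟨⟨h1, hwK⟩, h2⟩ | ⟨⟨h1, hwK⟩, h2⟩) <;>
        exact ⟨⟨fun he => hwx he.symm, by tauto⟩, hwK⟩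

lemma localComp_nbhd_eq {G : SimpleGraph V} {u x : V} (hux : ¬ G.Adj u x) :
    (localComp G u).neighborSet x = G.neighborSet x := by
  ext w
  simp only [mem_neighborSet, localComp]
  constructor
  · rintro ⟨hne, h⟩; tauto
  · intro h; exact ⟨fun he => G.loopless.irrefl x (he ▸ h), by tauto⟩

/-- If every vertex outside `D` sees `K ⊆ D` evenly,
`u ∉ D` and `v ∈ N_G(u) ∩ K`, then after local complementation at `u`:
(i) every vertex outside `D` still sees `K` evenly, and
(ii) `|N_{G'}(v) ∩ K|` and `|N_G(v) ∩ K|` have opposite parities. -/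
theorem statement_14 [Fintype V] (G : SimpleGraph V) (K D : Set V) (hKD : K ⊆ D)
    (hseen : ∀ x ∉ D, Even ((G.neighborSet x ∩ K).ncard))
    (u : V) (hu : u ∉ D) (v : V) (hv : v ∈ G.neighborSet u ∩ K) :
    (∀ x ∉ D, Even (((localComp G u).neighborSet x ∩ K).ncard)) ∧
      (Even (((localComp G u).neighborSet v ∩ K).ncard) ↔
        Odd ((G.neighborSet v ∩ K).ncard)) := by
  obtain ⟨hvu, hvK⟩ := hv
  rw [mem_neighborSet] at hvu
  constructor
  · intro x hx
    by_cases hux : G.Adj u x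
    · rw [localComp_nbhd_inter (fun h => hx (hKD h)) hux,
        even_ncard_symmDiff_iff]
      simp [hseen x hx, hseen u hu]
    · rw [localComp_nbhd_eq hux]
      exact hseen x hx
  · -- part (ii)
    have key : (localComp G u).neighborSet v ∩ K =
        symmDiff (G.neighborSet v ∩ K) (G.neighborSet u ∩ K) \ {v} := by
      ext w
      by_cases hwv : w = v
      · subst hwv
        simp [localComp, Set.mem_symmDiff]
      · simp only [Set.mem_inter_iff, Set.mem_symmDiff, mem_neighborSet, localComp,
          Set.mem_diff, Set.mem_singleton_iff]
        have := hvu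
        constructor
        · rintro ⟨⟨hne, h⟩, hwK⟩
          refine ⟨?_, hwv⟩
          by_cases h1 : G.Adj v w <;> by_cases h2 : G.Adj u w <;> tauto
        · rintro ⟨(⟨⟨h1, hwK⟩, h2⟩ | ⟨⟨h1, hwK⟩, h2⟩), _⟩ <;>
            exact ⟨⟨fun he => hwv he.symm, by tauto⟩, hwK⟩
    have hvmem : v ∈ symmDiff (G.neighborSet v ∩ K) (G.neighborSet u ∩ K) := by
      simp [Set.mem_symmDiff, hvu, hvK]
    rw [key, Set.ncard_diff_singleton_of_mem hvmem]
    have hpos : 1 ≤ (symmDiff (G.neighborSet v ∩ K) (G.neighborSet u ∩ K)).ncard :=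
      (Set.ncard_pos (Set.toFinite _)).2 ⟨v, hvmem⟩
    have heq := even_ncard_symmDiff_iff (G.neighborSet v ∩ K) (G.neighborSet u ∩ K)
    have hBeven := hseen u hu
    have h4 : Even (symmDiff (G.neighborSet v ∩ K) (G.neighborSet u ∩ K)).ncard ↔
        Even (G.neighborSet v ∩ K).ncard := by rw [heq]; simp [hBeven]
    rw [Nat.even_sub hpos]
    simp [h4, Nat.not_even_iff_odd, Nat.even_iff, Nat.odd_iff]
end

section
/- For every finite simple graph G, there exists a finite sequence of graph expansions transforming G into a graph G' whose maximum degree satisfies Δ(G') ≤ 3. -/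
open SimpleGraph

/-- The graph expansion of `G` with respect to a vertex `v` and a set
`R ⊆ N_G(v)`: two new vertices `u = Sum.inr 0` and `w = Sum.inr 1` are added,
the edges from `v` to `R` are removed, and the edges `(v,u)`, `(u,w)` and
`(w, v_i)` for `v_i ∈ R` are added. -/
def expand {V : Type} (G : SimpleGraph V) (v : V) (R : Set V) :
    SimpleGraph (V ⊕ Fin 2) where
  Adj x y :=
    match x, y with
    | Sum.inl a, Sum.inl b => G.Adj a b ∧ ¬(a = v ∧ b ∈ R) ∧ ¬(b = v ∧ a ∈ R)
    | Sum.inl a, Sum.inr i => (i = 0 ∧ a = v) ∨ (i = 1 ∧ a ∈ R)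
    | Sum.inr i, Sum.inl a => (i = 0 ∧ a = v) ∨ (i = 1 ∧ a ∈ R)
    | Sum.inr i, Sum.inr j => i ≠ j
  symm := by
    constructor
    rintro (a | i) (b | j) h
    · exact ⟨G.adj_symm h.1, h.2.2, h.2.1⟩
    · exact h
    · exact h
    · exact h.symm
  loopless := by
    constructor
    rintro (a | i) h
    · exact G.irrefl h.1
    · exact h rfl

/-- A finite simple graph, bundled with its (finite) vertex type. -/
structure FinSimpleGraph where
  V : Type
  fin : Fintype V
  G : SimpleGraph V

/-- `H'` is obtained from `H` by a single graph expansion (with respect to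
some vertex `v` and some set `R` of neighbors of `v`). -/
def ExpansionStep (H H' : FinSimpleGraph) : Prop :=
  ∃ (v : H.V) (R : Set H.V), R ⊆ H.G.neighborSet v ∧
    Nonempty (H'.G ≃g expand H.G v R)

section
variable {V : Type} (G : SimpleGraph V) (v : V) (R : Set V)

lemma nb_inl_of_ne (a : V) (ha : a ≠ v) (haR : a ∉ R) :
    (expand G v R).neighborSet (Sum.inl a) = Sum.inl '' G.neighborSet a := by
  ext (b | i)
  · simp only [mem_neighborSet, expand, Set.mem_image, Sum.inl.injEq]
    constructor
    · rintro ⟨h, -, -⟩; exact ⟨b, h, rfl⟩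
    · rintro ⟨c, hc, rfl⟩
      exact ⟨hc, fun h => ha h.1, fun h => haR h.2⟩
  · simp only [mem_neighborSet, expand, Set.mem_image]
    constructor
    · rintro (⟨rfl, rfl⟩ | ⟨rfl, h⟩)
      · exact absurd rfl ha
      · exact absurd h haR
    · rintro ⟨c, -, h⟩; exact absurd h (by simp)

lemma nb_inl_of_mem (hR : R ⊆ G.neighborSet v) (a : V) (haR : a ∈ R) :
    (expand G v R).neighborSet (Sum.inl a) =
      insert (Sum.inr 1) (Sum.inl '' (G.neighborSet a \ {v})) := by
  have hav : a ≠ v := fun h => G.loopless.irrefl v (h ▸ (hR haR))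
  ext (b | i)
  · simp only [mem_neighborSet, expand, Set.mem_insert_iff, Set.mem_image,
      Set.mem_diff, Set.mem_singleton_iff, Sum.inl.injEq]
    constructor
    · rintro ⟨h, -, h2⟩
      exact Or.inr ⟨b, ⟨h, fun hb => h2 ⟨hb, haR⟩⟩, rfl⟩
    · rintro (h | ⟨c, ⟨hc, hcv⟩, rfl⟩)
      · exact absurd h (by simp)
      · exact ⟨hc, fun h => hav h.1, fun h => hcv h.1⟩
  · simp only [mem_neighborSet, expand, Set.mem_insert_iff, Set.mem_image, Sum.inr.injEq]
    constructor
    · rintro (⟨rfl, rfl⟩ | ⟨rfl, -⟩)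
      · exact absurd rfl hav
      · exact Or.inl rfl
    · rintro (rfl | ⟨c, -, h⟩)
      · exact Or.inr ⟨by trivial, haR⟩
      · exact absurd h (by simp)

lemma nb_inl_v (hR : R ⊆ G.neighborSet v) :
    (expand G v R).neighborSet (Sum.inl v) =
      insert (Sum.inr 0) (Sum.inl '' (G.neighborSet v \ R)) := by
  ext (b | i)
  · simp only [mem_neighborSet, expand, Set.mem_insert_iff, Set.mem_image,
      Set.mem_diff, Sum.inl.injEq]
    constructor
    · rintro ⟨h, h1, -⟩
      exact Or.inr ⟨b, ⟨h, fun hb => h1 ⟨by trivial, hb⟩⟩, rfl⟩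
    · rintro (h | ⟨c, ⟨hc, hcR⟩, rfl⟩)
      · exact absurd h (by simp)
      · refine ⟨hc, fun h => hcR h.2, fun h => G.loopless.irrefl v (h.1 ▸ hc)⟩
  · simp only [mem_neighborSet, expand, Set.mem_insert_iff, Set.mem_image, Sum.inr.injEq]
    constructor
    · rintro (⟨rfl, -⟩ | ⟨rfl, h⟩)
      · exact Or.inl rfl
      · exact absurd (hR h) (G.loopless.irrefl v)
    · rintro (rfl | ⟨c, -, h⟩)
      · exact Or.inl ⟨by trivial, by trivial⟩
      · exact absurd h (by simp)

lemma nb_inr0 (hR : R ⊆ G.neighborSet v) :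
    (expand G v R).neighborSet (Sum.inr 0) = {Sum.inl v, Sum.inr 1} := by
  ext (b | i)
  · simp only [mem_neighborSet, expand, Set.mem_insert_iff, Set.mem_singleton_iff,
      Sum.inl.injEq]
    constructor
    · rintro (⟨-, rfl⟩ | ⟨h, -⟩)
      · exact Or.inl rfl
      · exact absurd h (by decide)
    · rintro (rfl | h)
      · exact Or.inl ⟨by trivial, rfl⟩
      · exact absurd h (by simp)
  · simp only [mem_neighborSet, expand, Set.mem_insert_iff, Set.mem_singleton_iff,
      Sum.inr.injEq]
    constructor
    · intro h; exact Or.inr (by omega)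
    · rintro (h | rfl)
      · exact absurd h (by simp)
      · decide

lemma nb_inr1 (hR : R ⊆ G.neighborSet v) :
    (expand G v R).neighborSet (Sum.inr 1) = insert (Sum.inr 0) (Sum.inl '' R) := by
  ext (b | i)
  · simp only [mem_neighborSet, expand, Set.mem_insert_iff, Set.mem_image, Sum.inl.injEq]
    constructor
    · rintro (⟨h, -⟩ | ⟨-, h⟩)
      · exact absurd h (by decide)
      · exact Or.inr ⟨b, h, rfl⟩
    · rintro (h | ⟨c, hc, rfl⟩)
      · exact absurd h (by simp)
      · exact Or.inr ⟨by trivial, hc⟩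
  · simp only [mem_neighborSet, expand, Set.mem_insert_iff, Set.mem_image, Sum.inr.injEq]
    constructor
    · intro h; exact Or.inl (by omega)
    · rintro (rfl | ⟨c, -, h⟩)
      · decide
      · exact absurd h (by simp)

end

noncomputable def mu (H : FinSimpleGraph) : ℕ :=
  letI := H.fin
  ∑ a : H.V, ((H.G.neighborSet a).ncard - 3)

lemma mu_step {V : Type} [Fintype V] (G : SimpleGraph V) (v : V) (R : Set V)
    (hR : R ⊆ G.neighborSet v) (hd : 4 ≤ (G.neighborSet v).ncard)
    (hRc : R.ncard = (G.neighborSet v).ncard - 2) :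
    mu ⟨V ⊕ Fin 2, inferInstance, expand G v R⟩ + 1 = mu ⟨V, ‹Fintype V›, G⟩ := by
  classical
  have hinj : Function.Injective (Sum.inl : V → V ⊕ Fin 2) := Sum.inl_injective
  -- degree computations
  have hnv : ((expand G v R).neighborSet (Sum.inl v)).ncard = 3 := by
    rw [nb_inl_v G v R hR, Set.ncard_insert_of_notMem (by simp),
      Set.ncard_image_of_injective _ hinj, Set.ncard_diff hR, hRc]
    omega
  have hna : ∀ a : V, a ≠ v →
      ((expand G v R).neighborSet (Sum.inl a)).ncard = (G.neighborSet a).ncard := by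
    intro a ha
    by_cases haR : a ∈ R
    · rw [nb_inl_of_mem G v R hR a haR, Set.ncard_insert_of_notMem (by simp),
        Set.ncard_image_of_injective _ hinj]
      exact Set.ncard_diff_singleton_add_one (G.adj_symm (hR haR))
    · rw [nb_inl_of_ne G v R a ha haR, Set.ncard_image_of_injective _ hinj]
  have hn0 : ((expand G v R).neighborSet (Sum.inr 0)).ncard = 2 := by
    rw [nb_inr0 G v R hR]; exact Set.ncard_pair (by simp)
  have hn1 : ((expand G v R).neighborSet (Sum.inr 1)).ncard = R.ncard + 1 := by
    rw [nb_inr1 G v R hR, Set.ncard_insert_of_notMem (by simp),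
      Set.ncard_image_of_injective _ hinj]
  -- the sums
  unfold mu
  rw [Fintype.sum_sum_type, Fin.sum_univ_two, hn0, hn1]
  rw [← Finset.sum_erase_add Finset.univ _ (Finset.mem_univ v),
    ← Finset.sum_erase_add Finset.univ
      (fun a => ((G.neighborSet a).ncard - 3)) (Finset.mem_univ v), hnv]
  have hS : ∑ a ∈ Finset.univ.erase v,
      (((expand G v R).neighborSet (Sum.inl a)).ncard - 3) =
      ∑ a ∈ Finset.univ.erase v, ((G.neighborSet a).ncard - 3) := by
    refine Finset.sum_congr rfl fun a ha => ?_
    rw [hna a (Finset.ne_of_mem_erase ha)]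
  rw [hS]
  omega

lemma aux_ind : ∀ (n : ℕ) (H : FinSimpleGraph), mu H ≤ n →
    ∃ H' : FinSimpleGraph,
      Relation.ReflTransGen ExpansionStep H H' ∧
        ∀ v : H'.V, (H'.G.neighborSet v).ncard ≤ 3 := by
  intro n
  induction n with
  | zero =>
    intro H hH
    refine ⟨H, Relation.ReflTransGen.refl, fun v => ?_⟩
    letI := H.fin
    have h1 : ((H.G.neighborSet v).ncard - 3) ≤ mu H :=
      Finset.single_le_sum (f := fun a => ((H.G.neighborSet a).ncard - 3))
        (fun i _ => Nat.zero_le _) (Finset.mem_univ v)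
    omega
  | succ n ih =>
    intro H hH
    letI := H.fin
    by_cases hall : ∀ v : H.V, (H.G.neighborSet v).ncard ≤ 3
    · exact ⟨H, Relation.ReflTransGen.refl, hall⟩
    push_neg at hall
    obtain ⟨v, hv⟩ := hall
    have hd : 4 ≤ (H.G.neighborSet v).ncard := hv
    obtain ⟨R, hR, hRc⟩ := Set.exists_subset_card_eq
      (show (H.G.neighborSet v).ncard - 2 ≤ (H.G.neighborSet v).ncard by omega)
    set H₁ : FinSimpleGraph := ⟨H.V ⊕ Fin 2, inferInstance, expand H.G v R⟩ with hH₁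
    have hstep : ExpansionStep H H₁ := ⟨v, R, hR, ⟨Iso.refl⟩⟩
    have hmu : mu H₁ + 1 = mu H := mu_step H.G v R hR hd hRc
    have hlb : ((H.G.neighborSet v).ncard - 3) ≤ mu H :=
      Finset.single_le_sum (f := fun a => ((H.G.neighborSet a).ncard - 3))
        (fun i _ => Nat.zero_le _) (Finset.mem_univ v)
    obtain ⟨H', h1, h2⟩ := ih H₁ (by omega)
    exact ⟨H', Relation.ReflTransGen.head hstep h1, h2⟩


/-- every finite simple graph can be transformed by a finite
sequence of graph expansions into a graph of maximum degree at most 3. -/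
theorem statement_15 (V : Type) [Fintype V] (G : SimpleGraph V) :
    ∃ H' : FinSimpleGraph,
      Relation.ReflTransGen ExpansionStep ⟨V, ‹Fintype V›, G⟩ H' ∧
        ∀ v : H'.V, (H'.G.neighborSet v).ncard ≤ 3 := by
  exact aux_ind (mu ⟨V, ‹Fintype V›, G⟩) _ le_rfl
end
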